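/- arXiv:1406.0908 — 2 statements merged into one kernel-verified Lean document; each statement's English description precedes it below -/
import Mathlib

section
/- Let k be a field and let 𝒞 be a k-linear abelian category. Let 0 → E → X → F → 0 be a short exact sequence in 𝒞 which does not split (the monomorphism E → X admits no retraction). Assume: (i) every morphism E → F is zero; (ii) every morphism F → E is zero; (iii) every endomorphism of E is a scalar multiple of the identity of E; (iv) every endomorphism of F is a scalar multiple of the identity of F. Then every endomorphism of X is a scalar multiple of the identity of X. -/
open CategoryTheory

/-- In a `k`-linear abelian category, a non-split extension `0 → E → X → F → 0` with
`Hom(E,F) = Hom(F,E) = 0` and `End(E)`, `End(F)` consisting of scalars has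
`End(X)` consisting of scalars. -/
theorem nonsplit_extension_schur
    {k : Type*} [Field k] {C : Type*} [Category C] [Abelian C] [Linear k C]
    {E X F : C} (f : E ⟶ X) (g : X ⟶ F) (w : f ≫ g = 0)
    (hse : (ShortComplex.mk f g w).ShortExact)
    (hnonsplit : ¬ ∃ r : X ⟶ E, f ≫ r = 𝟙 E)
    (hEF : ∀ φ : E ⟶ F, φ = 0)
    (hFE : ∀ φ : F ⟶ E, φ = 0)
    (hE : ∀ φ : E ⟶ E, ∃ a : k, φ = a • 𝟙 E)
    (hF : ∀ φ : F ⟶ F, ∃ a : k, φ = a • 𝟙 F) :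
    ∀ φ : X ⟶ X, ∃ a : k, φ = a • 𝟙 X := by
  intro φ
  have hc := hse.gIsCokernel
  have hk := hse.fIsKernel
  -- factor φ ≫ g through the cokernel g
  have h0 : f ≫ (φ ≫ g) = 0 := by
    rw [← Category.assoc]
    exact hEF _
  obtain ⟨ψ, hψ⟩ := Limits.CokernelCofork.IsColimit.desc' hc (φ ≫ g) h0
  obtain ⟨b, hb⟩ := hF ψ
  refine ⟨b, ?_⟩
  have h1 : (φ - b • 𝟙 X) ≫ g = 0 := by
    simp only [Preadditive.sub_comp, Linear.smul_comp, Category.id_comp]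
    rw [← hψ, hb]
    simp [Linear.comp_smul]
  obtain ⟨u, hu⟩ := Limits.KernelFork.IsLimit.lift' hk (φ - b • 𝟙 X) h1
  obtain ⟨a, ha⟩ := hE (f ≫ u)
  have ha0 : a = 0 := by
    by_contra hne
    exact hnonsplit ⟨a⁻¹ • u, by
      rw [Linear.comp_smul, ha, smul_smul, inv_mul_cancel₀ hne, one_smul]⟩
  have hfu : f ≫ u = 0 := by rw [ha, ha0, zero_smul]
  obtain ⟨v, hv⟩ := Limits.CokernelCofork.IsColimit.desc' hc u hfu
  have hv0 : v = 0 := hFE v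
  have hu0 : u = 0 := by rw [← hv, hv0, Limits.comp_zero]
  have := hu
  rw [hu0, Limits.zero_comp] at this
  exact sub_eq_zero.mp this.symm
end

section
/- Let m, M, δ, W be real numbers with 0 < m < M and δ ≥ 0, and set β = (m/(M − m))·δ. If W > 1 + β + √((1 + β)² − m·M), where √ denotes the real square root extended by 0 on negative arguments, then (M/m)·(W/2 − 1 − m²/(2W)) > W/2 − 1 − M²/(2W) + δ. -/
/-- The computational core of the effective Gieseker chamber bound: with
`0 < m < M`, `δ ≥ 0` and `β = (m/(M-m))·δ`, if
`W > 1 + β + √((1+β)² - m·M)` then `(M/m)(W/2 - 1 - m²/(2W)) > W/2 - 1 - M²/(2W) + δ`. -/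
theorem gieseker_chamber_inequality
    (m M δ W : ℝ) (hm : 0 < m) (hmM : m < M) (hδ : 0 ≤ δ)
    (hW : 1 + (m / (M - m)) * δ +
        Real.sqrt ((1 + (m / (M - m)) * δ) ^ 2 - m * M) < W) :
    W / 2 - 1 - M ^ 2 / (2 * W) + δ < (M / m) * (W / 2 - 1 - m ^ 2 / (2 * W)) := by
  set β : ℝ := (m / (M - m)) * δ with hβdef
  have hMm : 0 < M - m := by linarith
  have hβ : 0 ≤ β := by positivity
  set s : ℝ := Real.sqrt ((1 + β) ^ 2 - m * M) with hsdef
  have hs : 0 ≤ s := Real.sqrt_nonneg _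
  have hs2 : (1 + β) ^ 2 - m * M ≤ s ^ 2 := by
    rcases le_or_gt 0 ((1 + β) ^ 2 - m * M) with h | h
    · rw [hsdef, Real.sq_sqrt h]
    · nlinarith [sq_nonneg s]
  have hW0 : 0 < W := by nlinarith
  have key : 0 < W ^ 2 - 2 * (1 + β) * W + m * M := by nlinarith
  have hδβ : δ = (M - m) / m * β := by
    rw [hβdef]; field_simp
  have h1 : (M / m) * (W / 2 - 1 - m ^ 2 / (2 * W)) -
      (W / 2 - 1 - M ^ 2 / (2 * W) + δ) =
      ((M - m) / m) * ((W ^ 2 - 2 * (1 + β) * W + m * M) / (2 * W)) := by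
    rw [hδβ]; field_simp; ring
  nlinarith [mul_pos (div_pos hMm hm) (div_pos key (by linarith : (0:ℝ) < 2 * W)), h1]
end
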